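/- Let E be a real vector space and Γ : E ⇉ E a set-valued map with finitely closed convex values. If Γ is a KKM map (i.e., for every finite subset A of the domain of Γ, the convex hull of A is contained in the union of the Γ(x) for x ∈ A), then for every finite subset A of the domain of Γ, the intersection of the convex hull of A with ⋂{Γ(x) : x ∈ A} is nonempty. -/

import Mathlib

/-- A set `S` in a real vector space is *finitely closed* if its preimage under any
linear map from a Euclidean space `ℝⁿ` is closed (i.e. its intersection with every
finite-dimensional subspace is closed for the Euclidean topology). -/
def FinitelyClosed {E : Type*} [AddCommGroup E] [Module ℝ E] (S : Set E) : Prop :=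
  ∀ (n : ℕ) (f : (Fin n → ℝ) →ₗ[ℝ] E), IsClosed (f ⁻¹' S)


open Set

lemma segment_exists_eq {V : Type*} [NormedAddCommGroup V] [NormedSpace ℝ V]
    (f : V →L[ℝ] ℝ) {a b : V} {c : ℝ} (ha : f a < c) (hb : c < f b) :
    ∃ p ∈ segment ℝ a b, f p = c := by
  have hcont : ContinuousOn (fun t : ℝ => f (AffineMap.lineMap a b t)) (Set.Icc 0 1) :=
    (f.continuous.comp (AffineMap.lineMap_continuous)).continuousOn
  have hmem : c ∈ Set.Icc (f (AffineMap.lineMap a b (0:ℝ))) (f (AffineMap.lineMap a b (1:ℝ))) := by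
    simp only [AffineMap.lineMap_apply_zero, AffineMap.lineMap_apply_one]
    exact ⟨ha.le, hb.le⟩
  obtain ⟨t, ht, htc⟩ := intermediate_value_Icc zero_le_one hcont hmem
  refine ⟨AffineMap.lineMap a b t, ?_, htc⟩
  rw [segment_eq_image_lineMap]
  exact ⟨t, ht, rfl⟩

/-- Berge's intersection theorem. -/
lemma berge_inter {V : Type*} [NormedAddCommGroup V] [NormedSpace ℝ V] {ι : Type*}
    [DecidableEq ι] :
    ∀ (N : ℕ) (s : Finset ι) (C : ι → Set V), s.card = N →
      (∀ i ∈ s, Convex ℝ (C i)) → (∀ i ∈ s, IsCompact (C i)) →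
      (∀ i ∈ s, (C i).Nonempty) → Convex ℝ (⋃ i ∈ s, C i) →
      (∀ j ∈ s, (⋂ i ∈ s.erase j, C i).Nonempty) →
      (⋂ i ∈ s, C i).Nonempty := by
  intro N
  induction N with
  | zero =>
    intro s C hcard _ _ _ _ _
    rw [Finset.card_eq_zero] at hcard
    subst hcard
    simp
  | succ m IH =>
    intro s C hcard hconv hcomp hne hU hsub
    rcases Nat.eq_zero_or_pos m with hm0 | hmpos
    · subst hm0
      obtain ⟨j, rfl⟩ := Finset.card_eq_one.mp hcard
      simpa using hne j (Finset.mem_singleton_self j)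
    obtain ⟨j0, hj0⟩ : s.Nonempty := Finset.card_pos.mp (by omega)
    by_contra hcon
    set B := ⋂ i ∈ s.erase j0, C i with hB
    have hBne : B.Nonempty := hsub j0 hj0
    have herase_ne : (s.erase j0).Nonempty := by
      rw [← Finset.card_pos, Finset.card_erase_of_mem hj0, hcard]; omega
    have hBconv : Convex ℝ B :=
      convex_iInter₂ fun i hi => hconv i (Finset.mem_of_mem_erase hi)
    have hBclosed : IsClosed B :=
      isClosed_biInter fun i hi => (hcomp i (Finset.mem_of_mem_erase hi)).isClosed
    have hdisj : Disjoint (C j0) B := Set.disjoint_left.mpr <| by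
      intro p hp hpB
      refine hcon ⟨p, Set.mem_iInter₂.2 fun i hi => ?_⟩
      rcases eq_or_ne i j0 with rfl | hij
      · exact hp
      · exact Set.mem_iInter₂.1 hpB i (Finset.mem_erase.2 ⟨hij, hi⟩)
    obtain ⟨f, u, v, hu, huv, hv⟩ :=
      geometric_hahn_banach_compact_closed (hconv j0 hj0) (hcomp j0 hj0) hBconv hBclosed hdisj
    set c := (u + v) / 2 with hc
    have hcu : u < c := by rw [hc]; linarith
    have hcv : c < v := by rw [hc]; linarith
    have key : ∀ j ∈ s.erase j0,
        (⋂ i ∈ (s.erase j0).erase j, (C i ∩ {x | f x = c})).Nonempty := by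
      intro j hj
      have hjs : j ∈ s := Finset.mem_of_mem_erase hj
      have hjne : j ≠ j0 := Finset.ne_of_mem_erase hj
      obtain ⟨a, ha⟩ := hsub j hjs
      obtain ⟨b, hb⟩ := hBne
      have haj0 : a ∈ C j0 :=
        Set.mem_iInter₂.1 ha j0 (Finset.mem_erase.2 ⟨hjne.symm, hj0⟩)
      have hfa : f a < c := lt_trans (hu a haj0) hcu
      have hfb : c < f b := lt_trans hcv (hv b hb)
      obtain ⟨p, hpseg, hpc⟩ := segment_exists_eq f hfa hfb
      refine ⟨p, Set.mem_iInter₂.2 fun i hi => ⟨?_, hpc⟩⟩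
      have hi1 : i ∈ s.erase j0 := Finset.mem_of_mem_erase hi
      have hij : i ≠ j := Finset.ne_of_mem_erase hi
      have his : i ∈ s := Finset.mem_of_mem_erase hi1
      have haC : a ∈ C i :=
        Set.mem_iInter₂.1 ha i (Finset.mem_erase.2 ⟨hij, his⟩)
      have hbC : b ∈ C i := Set.mem_iInter₂.1 hb i hi1
      exact (hconv i his).segment_subset haC hbC hpseg
    rcases Nat.lt_or_ge m 2 with hm1 | hm2
    · -- m = 1 : s = {j0, j1}, direct contradiction
      interval_cases m
      obtain ⟨j1, hj1⟩ := herase_ne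
      have hers : s.erase j0 = {j1} := by
        apply Finset.eq_singleton_iff_unique_mem.mpr
        refine ⟨hj1, fun x hx => ?_⟩
        have hce : (s.erase j0).card = 1 := by
          rw [Finset.card_erase_of_mem hj0, hcard]
        obtain ⟨y, hy⟩ := Finset.card_eq_one.mp hce
        rw [hy] at hx hj1
        rw [Finset.mem_singleton] at hx hj1; rw [hx, hj1]
      obtain ⟨a, haj0⟩ := hne j0 hj0
      obtain ⟨b, hb⟩ := hBne
      have hfa : f a < c := lt_trans (hu a haj0) hcu
      have hfb : c < f b := lt_trans hcv (hv b hb)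
      obtain ⟨p, hpseg, hpc⟩ := segment_exists_eq f hfa hfb
      have hpU : p ∈ ⋃ i ∈ s, C i := by
        refine hU.segment_subset ?_ ?_ hpseg
        · exact Set.mem_biUnion hj0 haj0
        · refine Set.mem_biUnion (Finset.mem_of_mem_erase hj1) ?_
          exact Set.mem_iInter₂.1 hb j1 hj1
      obtain ⟨i, his, hpi⟩ := Set.mem_iUnion₂.1 hpU
      rcases eq_or_ne i j0 with rfl | hij0
      · exact absurd hpc (by have := hu p hpi; linarith)
      · have : i ∈ s.erase j0 := Finset.mem_erase.2 ⟨hij0, his⟩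
        rw [hers, Finset.mem_singleton] at this
        subst this
        have hpB : p ∈ B := Set.mem_iInter₂.2 fun k hk => by
          rw [hers, Finset.mem_singleton] at hk; subst hk; exact hpi
        exact absurd hpc (by have := hv p hpB; linarith)
    · -- m ≥ 2 : apply IH to s.erase j0 with C' i = C i ∩ {f = c}
      set C' : ι → Set V := fun i => C i ∩ {x | f x = c} with hC'
      have hhyp_conv : Convex ℝ {x : V | f x = c} :=
        convex_hyperplane ⟨f.map_add, f.map_smul⟩ c
      have hhyp_closed : IsClosed {x : V | f x = c} :=
        isClosed_eq f.continuous continuous_const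
      have hcard' : (s.erase j0).card = m := by
        rw [Finset.card_erase_of_mem hj0, hcard]; omega
      have hU' : (⋃ i ∈ s.erase j0, C' i) = (⋃ i ∈ s, C i) ∩ {x | f x = c} := by
        apply Set.Subset.antisymm
        · refine Set.iUnion₂_subset fun i hi => ?_
          exact Set.inter_subset_inter_left _
            (Set.subset_biUnion_of_mem (Finset.mem_of_mem_erase hi))
        · rintro x ⟨hx1, hx2⟩
          obtain ⟨i, his, hxi⟩ := Set.mem_iUnion₂.1 hx1
          have hij0 : i ≠ j0 := by
            rintro rfl
            exact absurd hx2 (by have := hu x hxi; simp only [Set.mem_setOf_eq]; linarith)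
          exact Set.mem_iUnion₂.2 ⟨i, Finset.mem_erase.2 ⟨hij0, his⟩, hxi, hx2⟩
      have hne' : ∀ i ∈ s.erase j0, (C' i).Nonempty := by
        intro i hi
        have : ((s.erase j0).erase i).Nonempty := by
          rw [← Finset.card_pos, Finset.card_erase_of_mem hi, hcard']; omega
        obtain ⟨j, hj⟩ := this
        obtain ⟨p, hp⟩ := key j (Finset.mem_of_mem_erase hj)
        refine ⟨p, Set.mem_iInter₂.1 hp i (Finset.mem_erase.2 ⟨?_, hi⟩)⟩
        exact (Finset.ne_of_mem_erase hj).symm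
      obtain ⟨p, hp⟩ := IH (s.erase j0) C' hcard'
        (fun i hi => (hconv i (Finset.mem_of_mem_erase hi)).inter hhyp_conv)
        (fun i hi => (hcomp i (Finset.mem_of_mem_erase hi)).inter_right hhyp_closed)
        hne' (hU' ▸ hU.inter hhyp_conv) key
      obtain ⟨i1, hi1⟩ := herase_ne
      have hpc : f p = c := (Set.mem_iInter₂.1 hp i1 hi1).2
      have hpB : p ∈ B := Set.mem_iInter₂.2 fun i hi => (Set.mem_iInter₂.1 hp i hi).1
      exact absurd hpc (by have := hv p hpB; linarith)

/-- (KKM) ⇒ (FIP) for convex-valued maps with finitely closed values. -/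
theorem convex_kkm_implies_fip {E : Type*} [AddCommGroup E] [Module ℝ E]
    (Γ : E → Set E)
    (hconv : ∀ x, Convex ℝ (Γ x))
    (hfc : ∀ x, FinitelyClosed (Γ x))
    (hKKM : ∀ A : Finset E, (↑A : Set E) ⊆ {x | (Γ x).Nonempty} →
      convexHull ℝ (↑A : Set E) ⊆ ⋃ x ∈ A, Γ x) :
    ∀ A : Finset E, A.Nonempty → (↑A : Set E) ⊆ {x | (Γ x).Nonempty} →
      (convexHull ℝ (↑A : Set E) ∩ ⋂ x ∈ A, Γ x).Nonempty := by
  classical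
  suffices H : ∀ (N : ℕ) (A : Finset E), A.card ≤ N → A.Nonempty →
      (↑A : Set E) ⊆ {x | (Γ x).Nonempty} →
      (convexHull ℝ (↑A : Set E) ∩ ⋂ x ∈ A, Γ x).Nonempty by
    intro A hA hdom
    exact H A.card A le_rfl hA hdom
  intro N
  induction N with
  | zero =>
    intro A hcard hA _
    rw [Nat.le_zero, Finset.card_eq_zero] at hcard
    subst hcard
    exact absurd hA (by simp)
  | succ N IH =>
    intro A hcard hAne hdom
    rcases eq_or_ne A.card 1 with h1 | h1
    · -- singleton case
      obtain ⟨x, rfl⟩ := Finset.card_eq_one.mp h1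
      have hxhull : x ∈ convexHull ℝ (↑({x} : Finset E) : Set E) :=
        subset_convexHull ℝ _ (by simp)
      have hx : x ∈ Γ x := by
        have := hKKM {x} hdom hxhull
        simpa using this
      exact ⟨x, hxhull, by simpa using hx⟩
    have hn2 : 2 ≤ A.card := by
      have := Finset.card_pos.mpr hAne; omega
    set n := A.card with hn
    set e : A ≃ Fin n := A.equivFin with he
    set g : Fin n → E := fun i => ((e.symm i : A) : E) with hg
    have hg_mem : ∀ i, g i ∈ A := fun i => (e.symm i).2
    have hg_inj : Function.Injective g := fun i j h =>
      e.symm.injective (Subtype.coe_injective h)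
    set f : (Fin n → ℝ) →ₗ[ℝ] E := Fintype.linearCombination ℝ g with hf
    have hf_apply : ∀ cc : Fin n → ℝ, f cc = ∑ i, cc i • g i := fun cc => rfl
    have himg : ∀ cc ∈ stdSimplex ℝ (Fin n), f cc ∈ convexHull ℝ (↑A : Set E) := by
      intro cc hcc
      have hsum : ∑ i, cc i = 1 := hcc.2
      have hcm : f cc = Finset.univ.centerMass cc g := by
        rw [hf_apply, Finset.centerMass_eq_of_sum_1 _ _ hsum]
      rw [hcm]
      exact Finset.centerMass_mem_convexHull _ (fun i _ => hcc.1 i)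
        (by rw [hsum]; exact one_pos) (fun i _ => Finset.mem_coe.2 (hg_mem i))
    have hsurj : ∀ q ∈ convexHull ℝ (↑A : Set E), ∃ cc ∈ stdSimplex ℝ (Fin n), f cc = q := by
      intro q hq
      obtain ⟨w, hw0, hw1, hwq⟩ := Finset.mem_convexHull.1 hq
      refine ⟨fun i => w (g i), ⟨fun i => hw0 _ (hg_mem i), ?_⟩, ?_⟩
      · calc ∑ i, w (g i) = ∑ a : A, w ↑a := Equiv.sum_comp e.symm (fun a : A => w ↑a)
          _ = ∑ y ∈ A, w y := Finset.sum_coe_sort A w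
          _ = 1 := hw1
      · rw [hf_apply]
        calc ∑ i, w (g i) • g i = ∑ a : A, w ↑a • (↑a : E) :=
              Equiv.sum_comp e.symm (fun a : A => w ↑a • (↑a : E))
          _ = ∑ y ∈ A, w y • y := Finset.sum_coe_sort A (fun y => w y • y)
          _ = A.centerMass w id := (Finset.centerMass_eq_of_sum_1 _ _ hw1).symm
          _ = q := hwq
    set T : Fin n → Set (Fin n → ℝ) := fun i => stdSimplex ℝ (Fin n) ∩ f ⁻¹' (Γ (g i))
      with hT
    have hTsub : ∀ i, T i ⊆ stdSimplex ℝ (Fin n) := fun i => Set.inter_subset_left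
    have hTconv : ∀ i, Convex ℝ (T i) := fun i =>
      (convex_stdSimplex ℝ _).inter ((hconv (g i)).linear_preimage f)
    have hTcomp : ∀ i, IsCompact (T i) := fun i =>
      (isCompact_stdSimplex ℝ _).inter_right (hfc (g i) n f)
    have hUnion : (⋃ i ∈ (Finset.univ : Finset (Fin n)), T i) = stdSimplex ℝ (Fin n) := by
      apply subset_antisymm
      · exact Set.iUnion₂_subset fun i _ => hTsub i
      · intro cc hcc
        obtain ⟨x, hxA, hx⟩ := Set.mem_iUnion₂.1 (hKKM A hdom (himg cc hcc))
        refine Set.mem_iUnion₂.2 ⟨e ⟨x, hxA⟩, Finset.mem_univ _, hcc, ?_⟩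
        show f cc ∈ Γ (g (e ⟨x, hxA⟩))
        have hgx : g (e ⟨x, hxA⟩) = x := by
          rw [hg]; simp
        rw [hgx]; exact hx
    have hsub : ∀ j ∈ (Finset.univ : Finset (Fin n)),
        (⋂ i ∈ (Finset.univ : Finset (Fin n)).erase j, T i).Nonempty := by
      intro j _
      set B := A.erase (g j) with hBdef
      have hBcard : B.card = n - 1 := by
        rw [hBdef, Finset.card_erase_of_mem (hg_mem j)]
      have hBne : B.Nonempty := Finset.card_pos.mp (by omega)
      have hBdom : (↑B : Set E) ⊆ {x | (Γ x).Nonempty} := fun x hx =>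
        hdom (Finset.mem_coe.2 (Finset.mem_of_mem_erase (Finset.mem_coe.1 hx)))
      obtain ⟨q, hq1, hq2⟩ := IH B (by omega) hBne hBdom
      have hqA : q ∈ convexHull ℝ (↑A : Set E) :=
        convexHull_mono (Finset.coe_subset.2 (Finset.erase_subset (g j) A)) hq1
      obtain ⟨cc, hccD, hccf⟩ := hsurj q hqA
      refine ⟨cc, Set.mem_iInter₂.2 fun i hi => ⟨hccD, ?_⟩⟩
      show f cc ∈ Γ (g i)
      rw [hccf]
      have hij : i ≠ j := Finset.ne_of_mem_erase hi
      have hgiB : g i ∈ B := Finset.mem_erase.2 ⟨fun h => hij (hg_inj h), hg_mem i⟩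
      exact Set.mem_iInter₂.1 hq2 (g i) hgiB
    have hne' : ∀ i ∈ (Finset.univ : Finset (Fin n)), (T i).Nonempty := by
      intro i _
      obtain ⟨j, hj⟩ : ((Finset.univ : Finset (Fin n)).erase i).Nonempty := by
        rw [← Finset.card_pos, Finset.card_erase_of_mem (Finset.mem_univ i),
          Finset.card_univ, Fintype.card_fin]
        omega
      obtain ⟨p, hp⟩ := hsub j (Finset.mem_univ j)
      exact ⟨p, Set.mem_iInter₂.1 hp i
        (Finset.mem_erase.2 ⟨(Finset.ne_of_mem_erase hj).symm, Finset.mem_univ i⟩)⟩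
    obtain ⟨cc, hcc⟩ := berge_inter n Finset.univ T (by simp)
      (fun i _ => hTconv i) (fun i _ => hTcomp i) hne'
      (hUnion ▸ convex_stdSimplex ℝ (Fin n)) hsub
    have hccD : cc ∈ stdSimplex ℝ (Fin n) :=
      (Set.mem_iInter₂.1 hcc ⟨0, by omega⟩ (Finset.mem_univ _)).1
    refine ⟨f cc, himg cc hccD, Set.mem_iInter₂.2 fun x hx => ?_⟩
    have hgx : g (e ⟨x, hx⟩) = x := by rw [hg]; simp
    rw [← hgx]
    exact (Set.mem_iInter₂.1 hcc (e ⟨x, hx⟩) (Finset.mem_univ _)).2
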